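/- arXiv:2305.06659 — 3 statements merged into one kernel-verified Lean document; each statement's English description precedes it below -/
import Mathlib

section
/- (Triangle inequality for self-edit distance) For any strings X and Y, selfed(Y) ≤ selfed(X) + 2·ed(X,Y), where ed denotes the (unweighted) Levenshtein edit distance. -/
abbrev Pt : Type := ℕ × ℕ

/-- A single step in an alignment path: right (deletion of an `X`-character),
down (insertion of a `Y`-character), or diagonal (aligning a pair of characters). -/
def AlignStep (p q : Pt) : Prop :=
  q = (p.1 + 1, p.2) ∨ q = (p.1, p.2 + 1) ∨ q = (p.1 + 1, p.2 + 1)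

/-- `A` is a monotone lattice path from `s` to `t` in the alignment graph. -/
def IsPath (s t : Pt) (A : List Pt) : Prop :=
  A.head? = some s ∧ A.getLast? = some t ∧ A.Chain' AlignStep

/-- The edges (consecutive pairs) of a path. -/
def edges (A : List Pt) : List (Pt × Pt) := A.zip A.tail

/-- Unweighted edit cost contributed by one edge: a diagonal edge costs 0 if the
two characters match and 1 otherwise (substitution); horizontal/vertical edges
(deletions/insertions) cost 1. -/
def edStep {α : Type*} [DecidableEq α] (X Y : List α) (e : Pt × Pt) : ℕ :=
  if e.2 = (e.1.1 + 1, e.1.2 + 1) then (if X[e.1.1]? = Y[e.1.2]? then 0 else 1) else 1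

/-- The number of edits made by the alignment (path) `A` of `X` onto `Y`. -/
def edCost {α : Type*} [DecidableEq α] (X Y : List α) (A : List Pt) : ℕ :=
  ((edges A).map (edStep X Y)).sum

/-- Weighted cost contributed by one edge, under weight function `w` (with `none` playing
the role of `ε`): diagonal edges cost `w X[x] Y[y]`, horizontal `w X[x] ε`, vertical `w ε Y[y]`. -/
noncomputable def wStep {α : Type*} (w : Option α → Option α → ℝ) (X Y : List α)
    (e : Pt × Pt) : ℝ :=
  if e.2 = (e.1.1 + 1, e.1.2 + 1) then w (X[e.1.1]?) (Y[e.1.2]?)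
  else if e.2 = (e.1.1 + 1, e.1.2) then w (X[e.1.1]?) none
  else w none (Y[e.1.2]?)

/-- The weighted cost of the alignment (path) `A` of `X` onto `Y` under `w`. -/
noncomputable def wCost {α : Type*} (w : Option α → Option α → ℝ) (X Y : List α)
    (A : List Pt) : ℝ :=
  ((edges A).map (wStep w X Y)).sum

/-- Unweighted (Levenshtein) edit distance. -/
noncomputable def ed {α : Type*} [DecidableEq α] (X Y : List α) : ℕ :=
  sInf { c | ∃ A, IsPath (0, 0) (X.length, Y.length) A ∧ edCost X Y A = c }

/-- Weighted edit distance under `w`. -/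
noncomputable def wed {α : Type*} (w : Option α → Option α → ℝ) (X Y : List α) : ℝ :=
  sInf { c | ∃ A, IsPath (0, 0) (X.length, Y.length) A ∧ wCost w X Y A = c }

/-- A path contains no diagonal edge on the main diagonal,
i.e. it never aligns a character to itself. -/
def NoSelfDiag (A : List Pt) : Prop :=
  ∀ e ∈ edges A, ¬ (e.1.1 = e.1.2 ∧ e.2 = (e.1.1 + 1, e.1.2 + 1))

/-- The self-edit distance of `X`: the minimum number of edits over all
self-alignments of `X` (alignments of `X` onto itself never aligning a character
to itself). -/
noncomputable def selfed {α : Type*} [DecidableEq α] (X : List α) : ℕ :=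
  sInf { c | ∃ A, IsPath (0, 0) (X.length, X.length) A ∧ NoSelfDiag A ∧ edCost X X A = c }

/-- The fragment `X[a..b)`. -/
def frag {α : Type*} (X : List α) (a b : ℕ) : List α := (X.drop a).take (b - a)

/-! ### Basic path machinery -/

def nextPt (p : Pt) (s : ℕ) : Pt :=
  match s with
  | 0 => (p.1 + 1, p.2)
  | 1 => (p.1, p.2 + 1)
  | _ => (p.1 + 1, p.2 + 1)

def pathOf (p : Pt) (L : List ℕ) : List Pt := L.scanl nextPt p

def endOf (p : Pt) (L : List ℕ) : Pt := L.foldl nextPt p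

lemma alignStep_nextPt (p : Pt) (s : ℕ) : AlignStep p (nextPt p s) := by
  unfold AlignStep nextPt
  match s with
  | 0 => left; rfl
  | 1 => right; left; rfl
  | (n+2) => right; right; rfl

lemma pathOf_nil (p : Pt) : pathOf p [] = [p] := rfl

lemma pathOf_cons (p : Pt) (s : ℕ) (L : List ℕ) :
    pathOf p (s :: L) = p :: pathOf (nextPt p s) L := by
  simp [pathOf, List.scanl_cons]

lemma pathOf_head? (p : Pt) (L : List ℕ) : (pathOf p L).head? = some p := by
  cases L with
  | nil => rfl
  | cons s L => rw [pathOf_cons]; rfl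

lemma endOf_cons (p : Pt) (s : ℕ) (L : List ℕ) :
    endOf p (s :: L) = endOf (nextPt p s) L := rfl

lemma pathOf_getLast? (p : Pt) (L : List ℕ) : (pathOf p L).getLast? = some (endOf p L) := by
  induction L generalizing p with
  | nil => rfl
  | cons s L ih =>
      rw [pathOf_cons, endOf_cons, List.getLast?_cons]
      rw [ih (nextPt p s)]
      simp

lemma pathOf_chain' (p : Pt) (L : List ℕ) : (pathOf p L).Chain' AlignStep := by
  induction L generalizing p with
  | nil => simp [pathOf_nil, List.Chain']
  | cons s L ih =>
      rw [pathOf_cons]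
      refine List.isChain_cons.2 ⟨?_, ih _⟩
      intro h hh
      rw [pathOf_head?] at hh
      cases hh
      exact alignStep_nextPt p s

lemma isPath_pathOf (p : Pt) (L : List ℕ) : IsPath p (endOf p L) (pathOf p L) :=
  ⟨pathOf_head? p L, pathOf_getLast? p L, pathOf_chain' p L⟩

lemma edges_cons (p q : Pt) (l : List Pt) :
    edges (p :: q :: l) = (p, q) :: edges (q :: l) := rfl

lemma edges_singleton (p : Pt) : edges [p] = [] := rfl

lemma edges_nil : edges ([] : List Pt) = [] := rfl

lemma edCost_cons {α : Type*} [DecidableEq α] (X Y : List α) (p q : Pt) (l : List Pt) :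
    edCost X Y (p :: q :: l) = edStep X Y (p, q) + edCost X Y (q :: l) := by
  simp [edCost, edges_cons]

/-- The diagonal origins of a path. -/
def diags (A : List Pt) : List Pt :=
  (edges A).filterMap (fun e => if e.2 = (e.1.1 + 1, e.1.2 + 1) then some e.1 else none)

lemma diags_nil : diags ([] : List Pt) = [] := rfl
lemma diags_singleton (p : Pt) : diags [p] = [] := rfl

lemma diags_cons (p q : Pt) (l : List Pt) :
    diags (p :: q :: l)
      = (if q = (p.1 + 1, p.2 + 1) then [p] else []) ++ diags (q :: l) := by
  simp only [diags, edges_cons, List.filterMap_cons]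
  by_cases h : q = (p.1 + 1, p.2 + 1) <;> simp [h]

lemma mem_diags {A : List Pt} {p : Pt} :
    p ∈ diags A ↔ (p, (p.1 + 1, p.2 + 1)) ∈ edges A := by
  constructor
  · intro h
    rcases List.mem_filterMap.1 h with ⟨e, he, hcond⟩
    by_cases hd : e.2 = (e.1.1 + 1, e.1.2 + 1)
    · rw [if_pos hd] at hcond
      cases hcond
      rwa [← hd, Prod.mk.eta]
    · rw [if_neg hd] at hcond; cases hcond
  · intro h
    exact List.mem_filterMap.2 ⟨(p, (p.1 + 1, p.2 + 1)), h, by simp⟩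

lemma mem_of_mem_edges {A : List Pt} {e : Pt × Pt} (h : e ∈ edges A) :
    e.1 ∈ A ∧ e.2 ∈ A := by
  induction A with
  | nil => cases h
  | cons p l ih =>
      cases l with
      | nil => cases h
      | cons q l' =>
          rw [edges_cons] at h
          rcases List.mem_cons.1 h with h | h
          · subst h; exact ⟨List.mem_cons_self, List.mem_cons_of_mem _ (List.mem_cons_self)⟩
          · rcases ih h with ⟨h1, h2⟩
            exact ⟨List.mem_cons_of_mem _ h1, List.mem_cons_of_mem _ h2⟩

lemma noSelfDiag_iff {A : List Pt} :
    NoSelfDiag A ↔ ∀ p ∈ diags A, p.1 ≠ p.2 := by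
  constructor
  · intro h p hp hpe
    exact h _ (mem_diags.1 hp) ⟨hpe, rfl⟩
  · intro h e he ⟨h1, h2⟩
    have : e.1 ∈ diags A := mem_diags.2 (by rwa [← h2, Prod.mk.eta])
    exact h _ this h1
/-! ### Structure of abstract paths -/

def lt2 (p q : Pt) : Prop := p.1 < q.1 ∧ p.2 < q.2

instance : IsTrans Pt lt2 :=
  ⟨fun _ _ _ h1 h2 => ⟨h1.1.trans h2.1, h1.2.trans h2.2⟩⟩

lemma alignStep_le {p q : Pt} (h : AlignStep p q) :
    p.1 ≤ q.1 ∧ p.2 ≤ q.2 := by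
  rcases h with h | h | h <;> subst h <;> exact ⟨by simp, by simp⟩

/-- every point of a chain is coordinatewise ≥ the head -/
lemma head_le_of_chain {A : List Pt} {h : Pt} (hc : A.Chain' AlignStep)
    (hh : A.head? = some h) : ∀ a ∈ A, h.1 ≤ a.1 ∧ h.2 ≤ a.2 := by
  induction A generalizing h with
  | nil => simp at hh
  | cons p l ih =>
      cases hh
      intro a ha
      rcases List.mem_cons.1 ha with rfl | ha
      · exact ⟨le_refl _, le_refl _⟩
      · cases l with
        | nil => cases ha
        | cons q l' =>
            have hstep : AlignStep p q := (List.isChain_cons_cons.1 hc).1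
            have := ih (List.isChain_cons_cons.1 hc).2 rfl a ha
            have h2 := alignStep_le hstep
            exact ⟨h2.1.trans this.1, h2.2.trans this.2⟩

lemma le_getLast_of_chain {A : List Pt} {t : Pt} (hc : A.Chain' AlignStep)
    (ht : A.getLast? = some t) : ∀ a ∈ A, a.1 ≤ t.1 ∧ a.2 ≤ t.2 := by
  induction A with
  | nil => simp at ht
  | cons p l ih =>
      intro a ha
      cases l with
      | nil =>
          simp at ht; subst ht
          rcases List.mem_singleton.1 ha with rfl
          exact ⟨le_refl _, le_refl _⟩
      | cons q l' =>
          rw [List.getLast?_cons_cons] at ht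
          have hc' := (List.isChain_cons_cons.1 hc).2
          rcases List.mem_cons.1 ha with rfl | ha
          · have hq := ih hc' ht q (List.mem_cons_self)
            have h2 := alignStep_le (List.isChain_cons_cons.1 hc).1
            exact ⟨h2.1.trans hq.1, h2.2.trans hq.2⟩
          · exact ih hc' ht a ha

lemma diags_bound {A : List Pt} {t : Pt} (hc : A.Chain' AlignStep)
    (ht : A.getLast? = some t) : ∀ p ∈ diags A, p.1 < t.1 ∧ p.2 < t.2 := by
  intro p hp
  have he := mem_diags.1 hp
  have := (mem_of_mem_edges he).2
  have h2 := le_getLast_of_chain hc ht _ this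
  simp only at h2
  omega

lemma diags_subset_points {A : List Pt} : ∀ p ∈ diags A, p ∈ A := by
  intro p hp
  exact (mem_of_mem_edges (mem_diags.1 hp)).1

lemma diags_chain' {A : List Pt} (hc : A.Chain' AlignStep) :
    (diags A).Chain' lt2 := by
  induction A with
  | nil => simp [diags_nil, List.Chain']
  | cons p l ih =>
      cases l with
      | nil => simp [diags_singleton, List.Chain']
      | cons q l' =>
          have hc' := (List.isChain_cons_cons.1 hc).2
          have hstep := (List.isChain_cons_cons.1 hc).1
          rw [diags_cons]
          by_cases hd : q = (p.1 + 1, p.2 + 1)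
          · rw [if_pos hd]
            simp only [List.singleton_append]
            refine List.isChain_cons.2 ⟨?_, ih hc'⟩
            intro r hr
            have hrmem : r ∈ diags (q :: l') := List.mem_of_mem_head? hr
            have hrpt : r ∈ (q :: l') := diags_subset_points _ hrmem
            have := head_le_of_chain hc' rfl r hrpt
            subst hd
            exact ⟨by simp at this ⊢; omega, by simp at this ⊢; omega⟩
          · rw [if_neg hd, List.nil_append]
            exact ih hc'

lemma diags_pairwise {A : List Pt} (hc : A.Chain' AlignStep) :
    (diags A).Pairwise lt2 := List.isChain_iff_pairwise.1 (diags_chain' hc)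

/-- number of mismatched pairs among a list of index pairs -/
def misCount {α : Type*} [DecidableEq α] (X Y : List α) (D : List Pt) : ℕ :=
  (D.filter (fun p => X[p.1]? ≠ Y[p.2]?)).length

lemma misCount_cons {α : Type*} [DecidableEq α] (X Y : List α) (p : Pt) (D : List Pt) :
    misCount X Y (p :: D)
      = (if X[p.1]? = Y[p.2]? then 0 else 1) + misCount X Y D := by
  by_cases h : X[p.1]? = Y[p.2]?
  · rw [if_pos h]
    unfold misCount
    rw [List.filter_cons_of_neg (by simp [h])]
    omega
  · rw [if_neg h]
    unfold misCount
    rw [List.filter_cons_of_pos (by simp [h])]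
    simp [Nat.add_comm]

/-- The fundamental cost identity for a path. -/
lemma cost_eq {α : Type*} [DecidableEq α] (X Y : List α) :
    ∀ (A : List Pt) (s t : Pt), A.Chain' AlignStep → A.head? = some s →
      A.getLast? = some t →
      edCost X Y A + 2 * (diags A).length + s.1 + s.2
        = t.1 + t.2 + misCount X Y (diags A) := by
  intro A
  induction A with
  | nil => intro s t _ hs; simp at hs
  | cons p l ih =>
      intro s t hc hs ht
      have hsp : s = p := by simpa using hs.symm
      subst hsp
      cases l with
      | nil =>
          simp at ht; subst ht
          simp [edCost, edges_singleton, diags_singleton, misCount]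
      | cons q l' =>
          rw [List.getLast?_cons_cons] at ht
          have hc' := (List.isChain_cons_cons.1 hc).2
          have hstep := (List.isChain_cons_cons.1 hc).1
          have key := ih q t hc' rfl ht
          rw [edCost_cons, diags_cons]
          rcases hstep with hq | hq | hq
          · -- right step
            have hne : q ≠ (s.1 + 1, s.2 + 1) := by subst hq; simp
            rw [if_neg hne, List.nil_append]
            have hcost : edStep X Y (s, q) = 1 := by
              simp only [edStep]
              rw [if_neg]
              subst hq; simp
            rw [hcost]
            subst hq
            simp only at key ⊢
            omega
          · -- down step
            have hne : q ≠ (s.1 + 1, s.2 + 1) := by subst hq; simp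
            rw [if_neg hne, List.nil_append]
            have hcost : edStep X Y (s, q) = 1 := by
              simp only [edStep]
              rw [if_neg]
              subst hq; simp
            rw [hcost]
            subst hq
            simp only at key ⊢
            omega
          · -- diagonal step
            rw [if_pos hq]
            have hcost : edStep X Y (s, q) = (if X[s.1]? = Y[s.2]? then 0 else 1) := by
              simp only [edStep]
              rw [if_pos (by subst hq; rfl)]
            rw [hcost]
            subst hq
            rw [List.singleton_append, misCount_cons]
            simp only [List.length_cons] at key ⊢
            by_cases hm : X[s.1]? = Y[s.2]?
            · rw [if_pos hm]; omega
            · rw [if_neg hm]; omega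
/-! ### Constructing a path with prescribed diagonals -/

lemma endOf_append (p : Pt) (L1 L2 : List ℕ) :
    endOf p (L1 ++ L2) = endOf (endOf p L1) L2 := List.foldl_append

lemma endOf_replicate0 (p : Pt) (k : ℕ) :
    endOf p (List.replicate k 0) = (p.1 + k, p.2) := by
  induction k generalizing p with
  | zero => simp [endOf]
  | succ k ih =>
      rw [List.replicate_succ, endOf_cons, ih]
      simp [nextPt]; omega

lemma endOf_replicate1 (p : Pt) (k : ℕ) :
    endOf p (List.replicate k 1) = (p.1, p.2 + k) := by
  induction k generalizing p with
  | zero => simp [endOf]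
  | succ k ih =>
      rw [List.replicate_succ, endOf_cons, ih]
      simp [nextPt]; omega

lemma diags_pathOf_cons (p : Pt) (s : ℕ) (L : List ℕ) :
    diags (pathOf p (s :: L))
      = (if nextPt p s = (p.1 + 1, p.2 + 1) then [p] else []) ++ diags (pathOf (nextPt p s) L) := by
  rw [pathOf_cons]
  cases hL : pathOf (nextPt p s) L with
  | nil => exact absurd (congrArg List.head? hL) (by rw [pathOf_head?]; simp)
  | cons q l =>
      have hq : q = nextPt p s := by
        have := pathOf_head? (nextPt p s) L
        rw [hL] at this; simp at this; exact this
      rw [diags_cons, hq]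

lemma diags_pathOf_append (p : Pt) (L1 L2 : List ℕ) :
    diags (pathOf p (L1 ++ L2))
      = diags (pathOf p L1) ++ diags (pathOf (endOf p L1) L2) := by
  induction L1 generalizing p with
  | nil => simp [pathOf_nil, diags_singleton, endOf]
  | cons s L1 ih =>
      rw [List.cons_append, diags_pathOf_cons, diags_pathOf_cons, ih, endOf_cons,
        List.append_assoc]

lemma diags_replicate0 (p : Pt) (k : ℕ) :
    diags (pathOf p (List.replicate k 0)) = [] := by
  induction k generalizing p with
  | zero => simp [pathOf_nil, diags_singleton]
  | succ k ih =>
      rw [List.replicate_succ, diags_pathOf_cons, ih]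
      rw [if_neg (by simp [nextPt])]
      simp

lemma diags_replicate1 (p : Pt) (k : ℕ) :
    diags (pathOf p (List.replicate k 1)) = [] := by
  induction k generalizing p with
  | zero => simp [pathOf_nil, diags_singleton]
  | succ k ih =>
      rw [List.replicate_succ, diags_pathOf_cons, ih]
      rw [if_neg (by simp [nextPt])]
      simp

lemma diags_single2 (p : Pt) : diags (pathOf p [2]) = [p] := by
  rw [diags_pathOf_cons]
  rw [if_pos (by rfl)]
  simp [pathOf_nil, diags_singleton]

/-- The step list realizing a given matching `D` from `a` to `t`. -/
def stepsOf (a t : Pt) : List Pt → List ℕ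
  | [] => List.replicate (t.1 - a.1) 0 ++ List.replicate (t.2 - a.2) 1
  | p :: D =>
      List.replicate (p.1 - a.1) 0 ++ List.replicate (p.2 - a.2) 1 ++ [2]
        ++ stepsOf (p.1 + 1, p.2 + 1) t D

lemma endOf_stepsOf (t : Pt) : ∀ (D : List Pt) (a : Pt),
    (∀ q ∈ D, a.1 ≤ q.1 ∧ a.2 ≤ q.2) → (∀ q ∈ D, q.1 < t.1 ∧ q.2 < t.2) →
    D.Pairwise lt2 → a.1 ≤ t.1 → a.2 ≤ t.2 →
    endOf a (stepsOf a t D) = t := by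
  intro D
  induction D with
  | nil =>
      intro a _ _ _ h1 h2
      rw [stepsOf, endOf_append, endOf_replicate0, endOf_replicate1]
      have : t = (t.1, t.2) := rfl
      rw [this]
      congr 1 <;> omega
  | cons p D ih =>
      intro a hlo hhi hpw h1 h2
      have hap := hlo p (List.mem_cons_self)
      have hpt := hhi p (List.mem_cons_self)
      rw [stepsOf, endOf_append, endOf_append, endOf_append, endOf_replicate0,
        endOf_replicate1]
      have hstep : endOf (a.1 + (p.1 - a.1), a.2 + (p.2 - a.2)) [2] = (p.1 + 1, p.2 + 1) := by
        show nextPt _ 2 = _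
        simp only [nextPt]
        have : a.1 + (p.1 - a.1) = p.1 := by omega
        have h2' : a.2 + (p.2 - a.2) = p.2 := by omega
        rw [this, h2']
      rw [hstep]
      exact ih (p.1 + 1, p.2 + 1)
        (fun q hq => by have := (List.pairwise_cons.1 hpw).1 q hq; exact ⟨this.1, this.2⟩)
        (fun q hq => hhi q (List.mem_cons_of_mem _ hq))
        (List.pairwise_cons.1 hpw).2 hpt.1 hpt.2

lemma diags_stepsOf (t : Pt) : ∀ (D : List Pt) (a : Pt),
    (∀ q ∈ D, a.1 ≤ q.1 ∧ a.2 ≤ q.2) → D.Pairwise lt2 →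
    diags (pathOf a (stepsOf a t D)) = D := by
  intro D
  induction D with
  | nil =>
      intro a _ _
      rw [stepsOf, diags_pathOf_append, diags_replicate0, endOf_replicate0, diags_replicate1]
      rfl
  | cons p D ih =>
      intro a hlo hpw
      have hap := hlo p (List.mem_cons_self)
      rw [stepsOf, List.append_assoc, List.append_assoc, diags_pathOf_append, diags_replicate0,
        endOf_replicate0, diags_pathOf_append, diags_replicate1, endOf_replicate1]
      have hpa : ((a.1 + (p.1 - a.1), a.2 + (p.2 - a.2)) : Pt) = p := by
        have h1 : a.1 + (p.1 - a.1) = p.1 := by omega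
        have h2 : a.2 + (p.2 - a.2) = p.2 := by omega
        rw [h1, h2]
      rw [hpa, diags_pathOf_append, diags_single2]
      have hend : endOf p [2] = (p.1 + 1, p.2 + 1) := rfl
      rw [hend, ih (p.1 + 1, p.2 + 1)
        (fun q hq => by have := (List.pairwise_cons.1 hpw).1 q hq; exact ⟨this.1, this.2⟩)
        (List.pairwise_cons.1 hpw).2]
      simp
/-! ### Generic counting and monotonicity lemmas -/

lemma pairwise_mem_cases {l : List Pt} (h : l.Pairwise lt2) :
    ∀ p ∈ l, ∀ q ∈ l, p = q ∨ lt2 p q ∨ lt2 q p := by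
  induction l with
  | nil => intro p hp; cases hp
  | cons a l ih =>
      have h1 := (List.pairwise_cons.1 h).1
      have h2 := (List.pairwise_cons.1 h).2
      intro p hp q hq
      rcases List.mem_cons.1 hp with hpa | hp
      · rcases List.mem_cons.1 hq with hqa | hq
        · left; rw [hpa, hqa]
        · right; left; rw [hpa]; exact h1 q hq
      · rcases List.mem_cons.1 hq with hqa | hq
        · right; right; rw [hqa]; exact h1 p hp
        · exact ih h2 p hp q hq

lemma pairwise_fst_mono {l : List Pt} (h : l.Pairwise lt2) :
    ∀ p ∈ l, ∀ q ∈ l, p.1 < q.1 → p.2 < q.2 := by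
  intro p hp q hq hlt
  rcases pairwise_mem_cases h p hp q hq with rfl | h' | h' <;> unfold lt2 at * <;> omega

lemma pairwise_fst_inj {l : List Pt} (h : l.Pairwise lt2) :
    ∀ p ∈ l, ∀ q ∈ l, p.1 = q.1 → p = q := by
  intro p hp q hq hlt
  rcases pairwise_mem_cases h p hp q hq with rfl | h' | h' <;> unfold lt2 at * <;> first
    | rfl | omega

lemma pairwise_snd_inj {l : List Pt} (h : l.Pairwise lt2) :
    ∀ p ∈ l, ∀ q ∈ l, p.2 = q.2 → p = q := by
  intro p hp q hq hlt
  rcases pairwise_mem_cases h p hp q hq with rfl | h' | h' <;> unfold lt2 at * <;> first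
    | rfl | omega

lemma sum_map_filterMap {γ β : Type*} (l : List γ) (h : γ → Option β) (φ : β → ℕ) :
    (((l.filterMap h).map φ)).sum = (l.map (fun a => ((h a).map φ).getD 0)).sum := by
  induction l with
  | nil => rfl
  | cons a l ih =>
      rw [List.filterMap_cons, List.map_cons]
      cases ha : h a with
      | none => simpa [ha] using ih
      | some b => simp [ha, ih]

lemma misCount_eq_sum {α : Type*} [DecidableEq α] (X Y : List α) (D : List Pt) :
    misCount X Y D = (D.map (fun p => if X[p.1]? = Y[p.2]? then 0 else 1)).sum := by
  induction D with
  | nil => rfl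
  | cons p D ih => rw [misCount_cons, List.map_cons, List.sum_cons, ih]

lemma sum_le_sum_map {γ : Type*} (l : List γ) (f g : γ → ℕ) (h : ∀ a ∈ l, f a ≤ g a) :
    (l.map f).sum ≤ (l.map g).sum := by
  induction l with
  | nil => exact le_refl 0
  | cons a l ih =>
      simp only [List.map_cons, List.sum_cons]
      exact Nat.add_le_add (h a (List.mem_cons_self))
        (ih (fun b hb => h b (List.mem_cons_of_mem _ hb)))

lemma sum_map_const_two {γ : Type*} (l : List γ) :
    (l.map (fun _ => (2:ℕ))).sum = 2 * l.length := by
  induction l with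
  | nil => rfl
  | cons a l ih => simp [ih]; ring

lemma sum_map_two_sub {γ : Type*} (l : List γ) (f : γ → ℕ) (hf : ∀ a, f a ≤ 2) :
    (l.map (fun a => 2 - f a)).sum + (l.map f).sum = 2 * l.length := by
  induction l with
  | nil => rfl
  | cons a l ih =>
      simp only [List.map_cons, List.sum_cons, List.length_cons]
      have := hf a
      omega

lemma ed_exists {α : Type*} [DecidableEq α] (X Y : List α) :
    ∃ A, IsPath (0, 0) (X.length, Y.length) A ∧ edCost X Y A = ed X Y := by
  have hne : { c | ∃ A, IsPath (0, 0) (X.length, Y.length) A ∧ edCost X Y A = c }.Nonempty := by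
    refine ⟨_, pathOf (0, 0) (List.replicate X.length 0 ++ List.replicate Y.length 1), ?_, rfl⟩
    have := isPath_pathOf (0, 0) (List.replicate X.length 0 ++ List.replicate Y.length 1)
    rw [endOf_append, endOf_replicate0, endOf_replicate1] at this
    simpa using this
  have := Nat.sInf_mem hne
  rcases this with ⟨A, h1, h2⟩
  exact ⟨A, h1, h2⟩

lemma selfed_exists {α : Type*} [DecidableEq α] (X : List α) :
    ∃ A, IsPath (0, 0) (X.length, X.length) A ∧ NoSelfDiag A ∧ edCost X X A = selfed X := by
  have hne : { c | ∃ A, IsPath (0, 0) (X.length, X.length) A ∧ NoSelfDiag A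
      ∧ edCost X X A = c }.Nonempty := by
    refine ⟨_, pathOf (0, 0) (List.replicate X.length 0 ++ List.replicate X.length 1), ?_, ?_, rfl⟩
    · have := isPath_pathOf (0, 0) (List.replicate X.length 0 ++ List.replicate X.length 1)
      rw [endOf_append, endOf_replicate0, endOf_replicate1] at this
      simpa using this
    · rw [noSelfDiag_iff, diags_pathOf_append, diags_replicate0, endOf_replicate0,
        diags_replicate1]
      simp
  have := Nat.sInf_mem hne
  rcases this with ⟨A, h1, h2, h3⟩
  exact ⟨A, h1, h2, h3⟩

/-- Triangle inequality for self-edit distance: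
`selfed Y ≤ selfed X + 2·ed(X,Y)`. -/
theorem selfed_triangle {α : Type*} [DecidableEq α] (X Y : List α) :
    selfed Y ≤ selfed X + 2 * ed X Y := by
  classical
  set n := X.length with hn
  set m := Y.length with hm
  obtain ⟨A, hApath, hAns, hAcost⟩ := selfed_exists X
  obtain ⟨B, hBpath, hBcost⟩ := ed_exists X Y
  obtain ⟨hAh, hAl, hAc⟩ := hApath
  obtain ⟨hBh, hBl, hBc⟩ := hBpath
  set DA := diags A with hDA
  set DB := diags B with hDB
  have hDApw : DA.Pairwise lt2 := diags_pairwise hAc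
  have hDBpw : DB.Pairwise lt2 := diags_pairwise hBc
  have hDAbd : ∀ p ∈ DA, p.1 < n ∧ p.2 < n := by
    intro p hp; have := diags_bound hAc hAl p hp; simpa using this
  have hDBbd : ∀ p ∈ DB, p.1 < n ∧ p.2 < m := by
    intro p hp; have := diags_bound hBc hBl p hp; simpa using this
  have hDAne : ∀ p ∈ DA, p.1 ≠ p.2 := noSelfDiag_iff.1 hAns
  -- the partial matching function of B
  set fB : ℕ → Option ℕ := fun x => (DB.find? (fun a => a.1 == x)).map Prod.snd with hfB
  have hfB_mem : ∀ x y, fB x = some y → (x, y) ∈ DB := by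
    intro x y h
    simp only [hfB, Option.map_eq_some_iff] at h
    rcases h with ⟨a, ha, rfl⟩
    have h1 := List.mem_of_find?_eq_some ha
    have h2 : a.1 = x := by simpa using List.find?_some ha
    rw [← h2]
    simpa using h1
  have hfB_of_mem : ∀ p ∈ DB, fB p.1 = some p.2 := by
    intro p hp
    have hs : (DB.find? (fun a => a.1 == p.1)).isSome :=
      List.find?_isSome.2 ⟨p, hp, by simp⟩
    obtain ⟨a, ha⟩ := Option.isSome_iff_exists.1 hs
    have h1 := List.mem_of_find?_eq_some ha
    have h2 : a.1 = p.1 := by simpa using List.find?_some ha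
    have h3 : a = p := pairwise_fst_inj hDBpw a h1 p hp h2
    simp only [hfB, ha, Option.map_some]
    rw [h3]
  -- the composed matching
  set hcomp : Pt → Option Pt :=
    fun q => (fB q.1).bind (fun y => (fB q.2).map (fun y' => (y, y'))) with hhcomp
  set C : List Pt := DA.filterMap hcomp with hC
  have hcomp_some : ∀ q p, hcomp q = some p →
      fB q.1 = some p.1 ∧ fB q.2 = some p.2 := by
    intro q p h
    simp only [hhcomp, Option.bind_eq_some_iff, Option.map_eq_some_iff] at h
    rcases h with ⟨y, hy, y', hy', rfl⟩
    exact ⟨hy, hy'⟩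
  have hCpw : C.Pairwise lt2 := by
    rw [hC, List.pairwise_filterMap]
    refine hDApw.imp_of_mem ?_
    intro q q' hq hq' hlt
    intro p hp p' hp'
    obtain ⟨h1, h2⟩ := hcomp_some q p hp
    obtain ⟨h1', h2'⟩ := hcomp_some q' p' hp'
    have m1 := hfB_mem _ _ h1
    have m2 := hfB_mem _ _ h2
    have m1' := hfB_mem _ _ h1'
    have m2' := hfB_mem _ _ h2'
    exact ⟨pairwise_fst_mono hDBpw (q.1, p.1) m1 (q'.1, p'.1) m1' hlt.1,
           pairwise_fst_mono hDBpw (q.2, p.2) m2 (q'.2, p'.2) m2' hlt.2⟩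
  have hCmem : ∀ p ∈ C, ∃ q ∈ DA, hcomp q = some p := by
    intro p hp
    rcases List.mem_filterMap.1 hp with ⟨q, hq, h⟩
    exact ⟨q, hq, h⟩
  have hCbd : ∀ p ∈ C, p.1 < m ∧ p.2 < m := by
    intro p hp
    obtain ⟨q, hq, h⟩ := hCmem p hp
    obtain ⟨h1, h2⟩ := hcomp_some q p h
    exact ⟨(hDBbd _ (hfB_mem _ _ h1)).2, (hDBbd _ (hfB_mem _ _ h2)).2⟩
  have hCne : ∀ p ∈ C, p.1 ≠ p.2 := by
    intro p hp heq
    obtain ⟨q, hq, h⟩ := hCmem p hp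
    obtain ⟨h1, h2⟩ := hcomp_some q p h
    have m1 := hfB_mem _ _ h1
    have m2 := hfB_mem _ _ h2
    rw [heq] at m1
    have := pairwise_snd_inj hDBpw _ m1 _ m2 rfl
    have : q.1 = q.2 := congrArg Prod.fst this
    exact hDAne q hq this
  -- the composed path
  set P : List Pt := pathOf (0, 0) (stepsOf (0, 0) (m, m) C) with hP
  have hPend : endOf (0, 0) (stepsOf (0, 0) (m, m) C) = (m, m) :=
    endOf_stepsOf (m, m) C (0, 0) (fun q _ => ⟨Nat.zero_le _, Nat.zero_le _⟩)
      (fun q hq => by have := hCbd q hq; simpa using this) hCpw (Nat.zero_le _) (Nat.zero_le _)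
  have hPdiags : diags P = C :=
    diags_stepsOf (m, m) C (0, 0) (fun q _ => ⟨Nat.zero_le _, Nat.zero_le _⟩) hCpw
  have hPpath : IsPath (0, 0) (m, m) P := by
    have := isPath_pathOf (0, 0) (stepsOf (0, 0) (m, m) C)
    rwa [hPend] at this
  have hPns : NoSelfDiag P := by
    rw [noSelfDiag_iff, hPdiags]
    exact hCne
  have hle : selfed Y ≤ edCost Y Y P :=
    Nat.sInf_le ⟨P, hPpath, hPns, rfl⟩
  -- cost identities
  have e1 : edCost Y Y P + 2 * C.length = m + m + misCount Y Y C := by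
    have := cost_eq Y Y P (0, 0) (m, m) hPpath.2.2 hPpath.1 hPpath.2.1
    rw [hPdiags] at this
    simpa using this
  have e2 : selfed X + 2 * DA.length = n + n + misCount X X DA := by
    have := cost_eq X X A (0, 0) (n, n) hAc hAh hAl
    rw [← hDA] at this
    rw [hAcost] at this
    simpa using this
  have e3 : ed X Y + 2 * DB.length = n + m + misCount X Y DB := by
    have := cost_eq X Y B (0, 0) (n, m) hBc hBh hBl
    rw [← hDB, hBcost] at this
    simpa using this
  -- counting functions
  set bmis : Pt → ℕ := fun p => if X[p.1]? = Y[p.2]? then 0 else 1 with hbmis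
  set amis : Pt → ℕ := fun q => if X[q.1]? = X[q.2]? then 0 else 1 with hamis
  set ymis : Pt → ℕ := fun p => if Y[p.1]? = Y[p.2]? then 0 else 1 with hymis
  set defect : ℕ → ℕ :=
    fun x => (fB x).elim 2 (fun y => if X[x]? = Y[y]? then 0 else 1) with hdefect
  set cfun : Pt → ℕ := fun q => ((hcomp q).map (fun p => 2 - ymis p)).getD 0 with hcfun
  have hymis_le : ∀ p, ymis p ≤ 2 := by
    intro p; simp only [hymis]; split <;> omega
  have hbmis_le : ∀ p, bmis p ≤ 2 := by
    intro p; simp only [hbmis]; split <;> omega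
  have hdefect_le : ∀ x, defect x ≤ 2 := by
    intro x
    simp only [hdefect]
    cases fB x with
    | none => simp
    | some y => simp only [Option.elim_some]; split <;> omega
  -- (6) : sum of cfun over DA
  have e6a : (DA.map cfun).sum = (C.map (fun p => 2 - ymis p)).sum := by
    rw [hC, sum_map_filterMap]
  have e6b : (C.map (fun p => 2 - ymis p)).sum + (C.map ymis).sum = 2 * C.length :=
    sum_map_two_sub C ymis hymis_le
  have e6c : misCount Y Y C = (C.map ymis).sum := misCount_eq_sum Y Y C
  -- (5) : pointwise inequality
  have e5 : 2 * DA.length ≤ (DA.map (fun q => cfun q + (amis q + (defect q.1 + defect q.2)))).sum := by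
    rw [← sum_map_const_two DA]
    refine sum_le_sum_map _ _ _ ?_
    intro q _
    cases h1 : fB q.1 with
    | none =>
        have : defect q.1 = 2 := by simp [hdefect, h1]
        omega
    | some y =>
        cases h2 : fB q.2 with
        | none =>
            have : defect q.2 = 2 := by simp [hdefect, h2]
            omega
        | some y' =>
            have hcq : hcomp q = some (y, y') := by
              simp [hhcomp, h1, h2]
            have hc : cfun q = 2 - ymis (y, y') := by
              simp [hcfun, hcq]
            have hd1 : defect q.1 = (if X[q.1]? = Y[y]? then 0 else 1) := by
              simp [hdefect, h1]
            have hd2 : defect q.2 = (if X[q.2]? = Y[y']? then 0 else 1) := by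
              simp [hdefect, h2]
            rw [hc, hd1, hd2]
            have hyle : ymis (y, y') ≤ 1 := by
              simp only [hymis]; split <;> omega
            by_cases k1 : X[q.1]? = Y[y]?
            · by_cases k2 : X[q.2]? = Y[y']?
              · by_cases k3 : X[q.1]? = X[q.2]?
                · have hyy : Y[y]? = Y[y']? := by rw [← k1, ← k2]; exact k3
                  have hy0 : ymis (y, y') = 0 := by simp only [hymis]; rw [if_pos hyy]
                  rw [hy0, if_pos k1, if_pos k2]
                  omega
                · have ha1 : amis q = 1 := by simp only [hamis]; rw [if_neg k3]
                  rw [ha1]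
                  omega
              · rw [if_neg k2]
                omega
            · rw [if_neg k1]
              omega
  have e5' : (DA.map (fun q => cfun q + (amis q + (defect q.1 + defect q.2)))).sum
      = (DA.map cfun).sum + ((DA.map amis).sum
        + ((DA.map (fun q => defect q.1)).sum + (DA.map (fun q => defect q.2)).sum)) := by
    rw [List.sum_map_add, List.sum_map_add, List.sum_map_add]
  have e5'' : misCount X X DA = (DA.map amis).sum := misCount_eq_sum X X DA
  -- (7) : defect sums over coordinates of DA
  set T : ℕ := ∑ x ∈ Finset.range n, defect x with hT
  have hnodup1 : (DA.map Prod.fst).Nodup := by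
    refine List.Pairwise.imp ?_ (List.Pairwise.map Prod.fst (fun a b h => h.1) hDApw)
    intro a b h; omega
  have hnodup2 : (DA.map Prod.snd).Nodup := by
    refine List.Pairwise.imp ?_ (List.Pairwise.map Prod.snd (fun a b h => h.2) hDApw)
    intro a b h; omega
  have sub1 : (DA.map Prod.fst).toFinset ⊆ Finset.range n := by
    intro x hx
    rcases List.mem_map.1 (List.mem_toFinset.1 hx) with ⟨q, hq, rfl⟩
    exact Finset.mem_range.2 (hDAbd q hq).1
  have sub2 : (DA.map Prod.snd).toFinset ⊆ Finset.range n := by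
    intro x hx
    rcases List.mem_map.1 (List.mem_toFinset.1 hx) with ⟨q, hq, rfl⟩
    exact Finset.mem_range.2 (hDAbd q hq).2
  have e7a : (DA.map (fun q => defect q.1)).sum ≤ T := by
    have h1 : (DA.map (fun q => defect q.1)).sum = ((DA.map Prod.fst).map defect).sum := by
      rw [List.map_map]; rfl
    rw [h1, ← List.sum_toFinset _ hnodup1, hT]
    exact Finset.sum_le_sum_of_subset sub1
  have e7b : (DA.map (fun q => defect q.2)).sum ≤ T := by
    have h1 : (DA.map (fun q => defect q.2)).sum = ((DA.map Prod.snd).map defect).sum := by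
      rw [List.map_map]; rfl
    rw [h1, ← List.sum_toFinset _ hnodup2, hT]
    exact Finset.sum_le_sum_of_subset sub2
  -- (8) : total defect
  have e8 : T + 2 * DB.length = 2 * n + misCount X Y DB := by
    set g : ℕ → ℕ := fun x => 2 - defect x with hg
    have h8a : T + ∑ x ∈ Finset.range n, g x = 2 * n := by
      rw [hT, ← Finset.sum_add_distrib]
      have : ∀ x ∈ Finset.range n, defect x + g x = 2 := by
        intro x _
        have := hdefect_le x
        simp only [hg]
        omega
      rw [Finset.sum_congr rfl this]
      simp [Finset.sum_const]
      ring
    have hDBnodup : (DB.map Prod.fst).Nodup := by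
      refine List.Pairwise.imp ?_ (List.Pairwise.map Prod.fst (fun a b h => h.1) hDBpw)
      intro a b h; omega
    have hsub : (DB.map Prod.fst).toFinset ⊆ Finset.range n := by
      intro x hx
      rcases List.mem_map.1 (List.mem_toFinset.1 hx) with ⟨q, hq, rfl⟩
      exact Finset.mem_range.2 (hDBbd q hq).1
    have h8b : ∑ x ∈ Finset.range n, g x = ∑ x ∈ (DB.map Prod.fst).toFinset, g x := by
      refine (Finset.sum_subset hsub ?_).symm
      intro x _ hx
      simp only [hg]
      cases hfx : fB x with
      | none => simp [hdefect, hfx]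
      | some y =>
          exfalso
          apply hx
          apply List.mem_toFinset.2
          exact List.mem_map.2 ⟨(x, y), hfB_mem _ _ hfx, rfl⟩
    have h8c : ∑ x ∈ (DB.map Prod.fst).toFinset, g x = (DB.map (fun p => 2 - bmis p)).sum := by
      rw [List.sum_toFinset _ hDBnodup, List.map_map]
      refine congrArg List.sum (List.map_congr_left ?_)
      intro p hp
      simp only [Function.comp, hg, hdefect, hfB_of_mem p hp, Option.elim_some, hbmis]
    have h8d : (DB.map (fun p => 2 - bmis p)).sum + (DB.map bmis).sum = 2 * DB.length :=
      sum_map_two_sub DB bmis hbmis_le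
    have h8e : misCount X Y DB = (DB.map bmis).sum := misCount_eq_sum X Y DB
    omega
  -- final arithmetic
  have key : edCost Y Y P ≤ selfed X + 2 * ed X Y := by omega
  exact hle.trans key
end

section
/- (Fragment alignment under triangle inequality) If a weight function w satisfies the triangle inequality, then for every string X and indices 0 ≤ i ≤ j ≤ |X|, wed(X, X[i..j)) = wed(X[0..i) · X[j..|X|), ε); i.e., the cheapest way to transform X into its own fragment X[i..j) is to delete the prefix X[0..i) and the suffix X[j..|X|). -/
section Aux
variable {α : Type*} (w : Option α → Option α → ℝ)

lemma wCost_cons_cons (X Y : List α) (p q : Pt) (l : List Pt) :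
    wCost w X Y (p :: q :: l) = wStep w X Y (p, q) + wCost w X Y (q :: l) := by
  simp [wCost, edges, List.zip]

lemma chain_lb (X Y : List α) (φ : Pt → ℝ)
    (hb : ∀ p q, AlignStep p q → φ p - φ q ≤ wStep w X Y (p, q)) :
    ∀ (A : List Pt) (s t : Pt), A.head? = some s → A.getLast? = some t →
      A.Chain' AlignStep → φ s - φ t ≤ wCost w X Y A := by
  intro A
  induction A with
  | nil => intro s t hs; simp at hs
  | cons p l ih =>
    cases l with
    | nil =>
      intro s t hs ht _
      simp at hs ht; subst hs; subst ht
      simp [wCost, edges]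
    | cons q m =>
      intro s t hs ht hc
      simp at hs; subst hs
      rw [List.getLast?_cons_cons] at ht
      simp only [List.Chain', List.isChain_cons_cons] at hc
      have h1 := hb p q hc.1
      have h2 := ih q t (by simp) ht hc.2
      rw [wCost_cons_cons]
      linarith

lemma isPath_map_range (f : ℕ → Pt) (n : ℕ)
    (hf : ∀ k < n, AlignStep (f k) (f (k + 1))) :
    IsPath (f 0) (f n) ((List.range (n + 1)).map f) := by
  refine ⟨?_, ?_, ?_⟩
  · rw [List.range_succ_eq_map]; simp
  · rw [List.range_succ, List.map_append]; simp
  · simp only [List.Chain', List.isChain_map]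
    exact (List.isChain_range_succ _ n).mpr hf

lemma wCost_map_range (X Y : List α) :
    ∀ (n : ℕ) (f : ℕ → Pt), wCost w X Y ((List.range (n + 1)).map f) =
      ∑ k ∈ Finset.range n, wStep w X Y (f k, f (k + 1)) := by
  intro n
  induction n with
  | zero => intro f; simp [wCost, edges, List.range_succ]
  | succ n ih =>
    intro f
    have e1 : (List.range (n + 1 + 1)).map f
        = f 0 :: (List.range (n + 1)).map (fun k => f (k + 1)) := by
      rw [List.range_succ_eq_map, List.map_cons, List.map_map]; rfl
    have e2 : (List.range (n + 1)).map (fun k => f (k + 1))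
        = f 1 :: (List.range n).map (fun k => f (k + 1 + 1)) := by
      rw [List.range_succ_eq_map, List.map_cons, List.map_map]; rfl
    rw [e1, e2, wCost_cons_cons, ← e2, ih (fun k => f (k + 1)),
      Finset.sum_range_succ' (fun k => wStep w X Y (f k, f (k + 1))) n]
    ring
end Aux

section Aux2
variable {α : Type*} (w : Option α → Option α → ℝ)

lemma sdiff (hw0 : ∀ a, w a a = 0) (L : List α) (x : ℕ) :
    (∑ k ∈ Finset.Ico x L.length, w (L[k]?) none)
      - (∑ k ∈ Finset.Ico (x + 1) L.length, w (L[k]?) none) = w (L[x]?) none := by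
  rcases lt_or_ge x L.length with h | h
  · rw [Finset.sum_eq_sum_Ico_succ_bot h]; ring
  · rw [Finset.Ico_eq_empty (by omega), Finset.Ico_eq_empty (by omega),
      List.getElem?_eq_none h]
    simp [hw0]

lemma wed_lb (hw0 : ∀ a, w a a = 0) (hwnn : ∀ a b, 0 ≤ w a b)
    (htri : ∀ a b c, w a b ≤ w a c + w c b) (X Y : List α) (A : List Pt)
    (hA : IsPath (0, 0) (X.length, Y.length) A) :
    (∑ k ∈ Finset.range X.length, w (X[k]?) none)
      - (∑ k ∈ Finset.range Y.length, w (Y[k]?) none) ≤ wCost w X Y A := by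
  set φ : Pt → ℝ := fun p => (∑ k ∈ Finset.Ico p.1 X.length, w (X[k]?) none)
      - (∑ k ∈ Finset.Ico p.2 Y.length, w (Y[k]?) none) with hφ
  have key : ∀ p q, AlignStep p q → φ p - φ q ≤ wStep w X Y (p, q) := by
    intro p q hstep
    have dX := sdiff w hw0 X p.1
    have dY := sdiff w hw0 Y p.2
    rcases hstep with h | h | h <;> subst h
    · have e : wStep w X Y (p, (p.1 + 1, p.2)) = w (X[p.1]?) none := by
        simp [wStep, Prod.ext_iff]
      rw [e]; simp only [hφ]; linarith
    · have e : wStep w X Y (p, (p.1, p.2 + 1)) = w none (Y[p.2]?) := by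
        simp [wStep, Prod.ext_iff]
      have h1 := hwnn (Y[p.2]?) none
      have h2 := hwnn (none : Option α) (Y[p.2]?)
      rw [e]; simp only [hφ]; linarith
    · have e : wStep w X Y (p, (p.1 + 1, p.2 + 1)) = w (X[p.1]?) (Y[p.2]?) := by
        simp [wStep]
      have h1 := htri (X[p.1]?) none (Y[p.2]?)
      rw [e]; simp only [hφ]; linarith
  have := chain_lb w X Y φ key A (0, 0) (X.length, Y.length) hA.1 hA.2.1 hA.2.2
  simp only [hφ, Finset.Ico_self, Finset.sum_empty, sub_zero, sub_self] at this
  rw [Finset.range_eq_Ico]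
  simpa using this
end Aux2

/-- Under the triangle inequality, the cheapest way to transform `X`
into its own fragment `X[i..j)` is to delete the prefix `X[0..i)` and the suffix
`X[j..|X|)`: `wed(X, X[i..j)) = wed(X[0..i)·X[j..|X|), ε)`. -/
theorem wed_to_own_fragment {α : Type*} (w : Option α → Option α → ℝ)
    (hw0 : ∀ a, w a a = 0) (hwnn : ∀ a b, 0 ≤ w a b)
    (htri : ∀ a b c, w a b ≤ w a c + w c b)
    (X : List α) (i j : ℕ) (hij : i ≤ j) (hj : j ≤ X.length) :
    wed w X (frag X i j) = wed w (frag X 0 i ++ frag X j X.length) ([] : List α) := by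
  set Y := frag X i j with hY
  set Z := frag X 0 i ++ frag X j X.length with hZdef
  have hXlen : i ≤ X.length := le_trans hij hj
  have hYlen : Y.length = j - i := by
    simp only [hY, frag, List.length_take, List.length_drop]
    omega
  have hYget : ∀ k, k < j - i → Y[k]? = X[i + k]? := by
    intro k hk
    rw [hY, frag, List.getElem?_take_of_lt hk, List.getElem?_drop]
  have hZ : Z = X.take i ++ X.drop j := by
    have h1 : frag X 0 i = X.take i := by simp [frag]
    have h2 : frag X j X.length = X.drop j := by
      rw [frag]
      have h3 : X.length - j = (X.drop j).length := by simp
      rw [h3, List.take_length]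
    rw [hZdef, h1, h2]
  have hZlen : Z.length = i + (X.length - j) := by
    rw [hZ]; simp; omega
  have hZget1 : ∀ k, k < i → Z[k]? = X[k]? := by
    intro k hk
    rw [hZ, List.getElem?_append_left (by simp only [List.length_take]; omega), List.getElem?_take_of_lt hk]
  have hZget2 : ∀ k, Z[i + k]? = X[j + k]? := by
    intro k
    rw [hZ, List.getElem?_append_right (by simp only [List.length_take]; omega)]
    have h4 : i + k - (X.take i).length = k := by simp only [List.length_take]; omega
    rw [h4, List.getElem?_drop]
  -- the candidate common value
  set C : ℝ := (∑ k ∈ Finset.Ico 0 i, w (X[k]?) none)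
      + (∑ k ∈ Finset.Ico j X.length, w (X[k]?) none) with hC
  have splitX : ∀ F : ℕ → ℝ, ∑ k ∈ Finset.range X.length, F k
      = (∑ k ∈ Finset.Ico 0 i, F k) + (∑ k ∈ Finset.Ico i j, F k)
        + (∑ k ∈ Finset.Ico j X.length, F k) := by
    intro F
    rw [Finset.sum_Ico_consecutive F (Nat.zero_le i) hij,
      Finset.sum_Ico_consecutive F (Nat.zero_le j) hj, Finset.range_eq_Ico]
  have sDY : (∑ k ∈ Finset.range Y.length, w (Y[k]?) none)
      = ∑ k ∈ Finset.Ico i j, w (X[k]?) none := by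
    rw [hYlen, Finset.sum_Ico_eq_sum_range]
    refine Finset.sum_congr rfl ?_
    intro k hk
    rw [hYget k (Finset.mem_range.mp hk)]
  have sDZ : (∑ k ∈ Finset.range Z.length, w (Z[k]?) none) = C := by
    rw [hZlen, Finset.range_eq_Ico,
      ← Finset.sum_Ico_consecutive _ (Nat.zero_le i) (Nat.le_add_right i _)]
    have e1 : ∑ k ∈ Finset.Ico 0 i, w (Z[k]?) none
        = ∑ k ∈ Finset.Ico 0 i, w (X[k]?) none := by
      refine Finset.sum_congr rfl ?_
      intro k hk
      rw [hZget1 k (by simp at hk; omega)]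
    have e2 : ∑ k ∈ Finset.Ico i (i + (X.length - j)), w (Z[k]?) none
        = ∑ k ∈ Finset.Ico j X.length, w (X[k]?) none := by
      rw [Finset.sum_Ico_eq_sum_range, Finset.sum_Ico_eq_sum_range]
      have h5 : i + (X.length - j) - i = X.length - j := by omega
      rw [h5]
      refine Finset.sum_congr rfl ?_
      intro k _
      rw [hZget2 k]
    rw [e1, e2, hC]
  -- path for LHS
  set f1 : ℕ → Pt := fun k => (k, min (k - i) (j - i)) with hf1
  have hsteps1 : ∀ k, k < X.length → AlignStep (f1 k) (f1 (k + 1)) := by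
    intro k hk
    by_cases h1 : k < i
    · left; simp [hf1, Prod.ext_iff]; omega
    · by_cases h2 : k < j
      · right; right; simp [hf1, Prod.ext_iff]; omega
      · left; simp [hf1, Prod.ext_iff]; omega
  have hp1 := isPath_map_range f1 X.length hsteps1
  have hf10 : f1 0 = (0, 0) := by simp [hf1, Prod.ext_iff]
  have hf1n : f1 X.length = (X.length, Y.length) := by
    rw [hYlen]; simp [hf1, Prod.ext_iff]; omega
  rw [hf10, hf1n] at hp1
  have hc1 : wCost w X Y ((List.range (X.length + 1)).map f1) = C := by
    rw [wCost_map_range, splitX]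
    have p1 : ∑ k ∈ Finset.Ico 0 i, wStep w X Y (f1 k, f1 (k + 1))
        = ∑ k ∈ Finset.Ico 0 i, w (X[k]?) none := by
      refine Finset.sum_congr rfl ?_
      intro k hk
      rw [Finset.mem_Ico] at hk
      have ha : f1 k = (k, 0) := by simp [hf1, Prod.ext_iff]; omega
      have hb : f1 (k + 1) = (k + 1, 0) := by simp [hf1, Prod.ext_iff]; omega
      rw [ha, hb]
      simp [wStep]
    have p2 : ∑ k ∈ Finset.Ico i j, wStep w X Y (f1 k, f1 (k + 1)) = 0 := by
      refine Finset.sum_eq_zero ?_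
      intro k hk
      rw [Finset.mem_Ico] at hk
      have ha : f1 k = (k, k - i) := by simp [hf1, Prod.ext_iff]; omega
      have hb : f1 (k + 1) = (k + 1, (k - i) + 1) := by simp [hf1, Prod.ext_iff]; omega
      rw [ha, hb]
      have hs : wStep w X Y ((k, k - i), (k + 1, (k - i) + 1))
          = w (X[k]?) (Y[k - i]?) := by simp [wStep]
      rw [hs, hYget (k - i) (by omega)]
      have h6 : i + (k - i) = k := by omega
      rw [h6, hw0]
    have p3 : ∑ k ∈ Finset.Ico j X.length, wStep w X Y (f1 k, f1 (k + 1))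
        = ∑ k ∈ Finset.Ico j X.length, w (X[k]?) none := by
      refine Finset.sum_congr rfl ?_
      intro k hk
      rw [Finset.mem_Ico] at hk
      have ha : f1 k = (k, j - i) := by simp [hf1, Prod.ext_iff]; omega
      have hb : f1 (k + 1) = (k + 1, j - i) := by simp [hf1, Prod.ext_iff]; omega
      rw [ha, hb]
      simp [wStep]
    rw [p1, p2, p3, hC]
    ring
  have mem1 : C ∈ {c | ∃ A, IsPath (0, 0) (X.length, Y.length) A ∧ wCost w X Y A = c} :=
    ⟨_, hp1, hc1⟩
  -- path for RHS
  set f2 : ℕ → Pt := fun k => (k, 0) with hf2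
  have hsteps2 : ∀ k, k < Z.length → AlignStep (f2 k) (f2 (k + 1)) := by
    intro k _; left; rfl
  have hp2 := isPath_map_range f2 Z.length hsteps2
  have hf20 : f2 0 = (0, 0) := rfl
  have hf2n : f2 Z.length = (Z.length, ([] : List α).length) := rfl
  rw [hf20, hf2n] at hp2
  have hc2 : wCost w Z ([] : List α) ((List.range (Z.length + 1)).map f2) = C := by
    rw [wCost_map_range, ← sDZ]
    refine Finset.sum_congr rfl ?_
    intro k _
    simp [hf2, wStep]
  have mem2 : C ∈ {c | ∃ A, IsPath (0, 0) (Z.length, ([] : List α).length) A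
      ∧ wCost w Z ([] : List α) A = c} := ⟨_, hp2, hc2⟩
  -- lower bounds
  have lb1 : ∀ c ∈ {c | ∃ A, IsPath (0, 0) (X.length, Y.length) A ∧ wCost w X Y A = c},
      C ≤ c := by
    rintro c ⟨A, hA, rfl⟩
    have h := wed_lb w hw0 hwnn htri X Y A hA
    rw [splitX (fun k => w (X[k]?) none), sDY] at h
    rw [hC]
    linarith
  have lb2 : ∀ c ∈ {c | ∃ A, IsPath (0, 0) (Z.length, ([] : List α).length) A
      ∧ wCost w Z ([] : List α) A = c}, C ≤ c := by
    rintro c ⟨A, hA, rfl⟩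
    have h := wed_lb w hw0 hwnn htri Z ([] : List α) A hA
    rw [sDZ] at h
    simpa using h
  have eq1 : wed w X Y = C :=
    le_antisymm (csInf_le ⟨C, fun c hc => lb1 c hc⟩ mem1) (le_csInf ⟨C, mem1⟩ lb1)
  have eq2 : wed w Z ([] : List α) = C :=
    le_antisymm (csInf_le ⟨C, fun c hc => lb2 c hc⟩ mem2) (le_csInf ⟨C, mem2⟩ lb2)
  rw [eq1, eq2]
end

section
/- (Separator counting forces exact matching of the utility subsequences) Let U = u_1⋯u_r and V = v_1⋯v_r be strings of fresh distinct characters. Suppose Ŷ contains as a subsequence (restricted to characters u_q, v_q for a fixed q) the string (u_q v_q)^m, and X̂ contains (u_q v_q)^{m−1}. If an alignment of X̂ onto Ŷ makes at most two edits involving the occurrences of u_q and v_q in Ŷ, and it matches all occurrences of u_q and v_q in X̂ exactly, then there exists an index i ∈ [1, m] such that the matched occurrences correspond to deleting the i-th consecutive pair u_q v_q (or a pair v_q u_q straddling consecutive blocks) from (u_q v_q)^m; i.e., the unmatched occurrences of u_q, v_q in Ŷ are two adjacent characters of the subsequence (u_q v_q)^m. -/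
/-- The alternating string `(u v)^m`. -/
def altStr {α : Type*} (u v : α) : ℕ → List α
  | 0 => []
  | n + 1 => u :: v :: altStr u v n

lemma altStr_get?' {α : Type*} (u v : α) : ∀ (k t : ℕ),
    (altStr u v k)[t]? = if t < 2*k then some (if t % 2 = 0 then u else v) else none := by
  intro k
  induction k with
  | zero => intro t; simp [altStr]
  | succ k ih =>
    intro t
    match t with
    | 0 => simp [altStr]
    | 1 =>
      have : (1 : ℕ) < 2 * (k+1) := by omega
      simp [altStr, this]
    | t+2 =>
      show (altStr u v k)[t]? = _
      rw [ih t]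
      have h2 : (t+2) % 2 = t % 2 := by omega
      by_cases h : t < 2*k
      · rw [if_pos h, if_pos (by omega : t+2 < 2*(k+1)), h2]
      · rw [if_neg h, if_neg (by omega : ¬ t+2 < 2*(k+1))]

/-- Matching `(u_q v_q)^{m-1}` exactly as a subsequence of
`(u_q v_q)^m` (via an order-preserving, character-preserving map `φ`) leaves exactly two
unmatched characters, and these are adjacent in `(u_q v_q)^m`. -/
theorem separator_matching {α : Type*} (u v : α) (huv : u ≠ v) (m : ℕ) (hm : 1 ≤ m)
    (φ : ℕ → ℕ)
    (hmono : ∀ s t, s < t → t < 2 * (m - 1) → φ s < φ t)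
    (hbound : ∀ t < 2 * (m - 1), φ t < 2 * m)
    (hmatch : ∀ t < 2 * (m - 1),
      (altStr u v (m - 1))[t]? = (altStr u v m)[φ t]?) :
    ∃ j, j + 1 < 2 * m ∧
      ∀ s < 2 * m, ((∀ t < 2 * (m - 1), φ t ≠ s) ↔ (s = j ∨ s = j + 1)) := by
  obtain ⟨n, rfl⟩ : ∃ n, m = n + 1 := ⟨m - 1, by omega⟩
  simp only [Nat.add_sub_cancel] at hmono hbound hmatch ⊢
  -- parity preservation
  have hpar : ∀ t < 2*n, φ t % 2 = t % 2 := by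
    intro t ht
    have hb := hbound t ht
    have hm' := hmatch t ht
    rw [altStr_get?', altStr_get?', if_pos ht, if_pos hb] at hm'
    by_cases h1 : t % 2 = 0 <;> by_cases h2 : φ t % 2 = 0 <;>
      simp only [h1, h2, if_pos, if_neg, if_true, if_false, Option.some.injEq] at hm' <;>
      first
        | omega
        | (exact absurd hm' huv)
        | (exact absurd hm'.symm huv)
  -- φ t ≥ t
  have hge : ∀ t, t < 2*n → t ≤ φ t := by
    intro t
    induction t with
    | zero => intro _; exact Nat.zero_le _
    | succ t ih =>
      intro ht
      have h1 := hmono t (t+1) (Nat.lt_succ_self t) ht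
      have h2 := ih (by omega)
      omega
  -- strict monotonicity quantitatively
  have hmono2 : ∀ t, t < 2*n → ∀ s, s ≤ t → t + φ s ≤ s + φ t := by
    intro t
    induction t with
    | zero =>
      intro _ s hs
      have hs0 : s = 0 := by omega
      subst hs0; omega
    | succ t ih =>
      intro ht s hs
      rcases Nat.eq_or_lt_of_le hs with h | h
      · subst h; omega
      · have h1 := hmono t (t+1) (Nat.lt_succ_self t) ht
        have h2 := ih (by omega) s (by omega)
        omega
  -- φ t ≤ t + 2
  have hle2 : ∀ t < 2*n, φ t ≤ t + 2 := by
    intro t ht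
    have hT : 2*n - 1 < 2*n := by omega
    have h1 := hmono2 (2*n-1) hT t (by omega)
    have h2 := hbound (2*n-1) hT
    omega
  -- dichotomy
  have hdich : ∀ t < 2*n, φ t = t ∨ φ t = t + 2 := by
    intro t ht
    have := hpar t ht
    have := hge t ht
    have := hle2 t ht
    omega
  by_cases hex : ∃ t, t < 2*n ∧ φ t = t + 2
  · obtain ⟨k, ⟨hk1, hk2⟩, hkmin⟩ :
        ∃ k, (k < 2*n ∧ φ k = k + 2) ∧ ∀ t < k, ¬(t < 2*n ∧ φ t = t + 2) :=
      ⟨Nat.find hex, Nat.find_spec hex, fun t ht => Nat.find_min hex ht⟩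
    have hlt : ∀ t < k, t < 2*n → φ t = t := by
      intro t htk ht
      rcases hdich t ht with h | h
      · exact h
      · exact absurd ⟨ht, h⟩ (hkmin t htk)
    have hgek : ∀ t, k ≤ t → t < 2*n → φ t = t + 2 := by
      intro t hkt ht
      have h1 := hmono2 t ht k hkt
      have h2 := hle2 t ht
      omega
    refine ⟨k, by omega, ?_⟩
    intro s hs
    constructor
    · intro hun
      by_contra hc
      push_neg at hc
      rcases Nat.lt_or_ge s k with h | h
      · exact hun s (by omega) (hlt s h (by omega))
      · have hs2 : k ≤ s - 2 := by omega
        have hs3 : s - 2 < 2*n := by omega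
        exact hun (s-2) hs3 (by rw [hgek (s-2) hs2 hs3]; omega)
    · intro hs' t ht
      rcases Nat.lt_or_ge t k with h | h
      · have := hlt t h ht
        rcases hs' with rfl | rfl <;> omega
      · have := hgek t h ht
        rcases hs' with rfl | rfl <;> omega
  · push_neg at hex
    have hall : ∀ t < 2*n, φ t = t := by
      intro t ht
      rcases hdich t ht with h | h
      · exact h
      · exact absurd h (hex t ht)
    refine ⟨2*n, by omega, ?_⟩
    intro s hs
    constructor
    · intro hun
      by_contra hc
      push_neg at hc
      exact hun s (by omega) (hall s (by omega))
    · rintro (rfl | rfl) <;>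
      · intro t ht
        rw [hall t ht]; omega
end
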